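/- Let W : Y² − XY + Y = X³ be the elliptic curve 14A4 over ℚ, let P = (0,0) and Q = (−1,−1) (points of order 3 and 2 respectively), and let p = −(P + Q) = (1, 1), a point of order 6. Then: (a) the slope of the chord through p and 2p equals the slope of the tangent line to W at 4p; (b) the slope of the chord through 3p and 4p equals the slope of the tangent line to W at 2p. (Here the slope through distinct affine points u ≠ v with x(u) ≠ x(v) is (y(v) − y(u))/(x(v) − x(u)), and the tangent slope at a point (x₀,y₀) of W is the slope of the tangent line to the plane curve Y² − XY + Y = X³ there; all these lines are non-vertical.) -/

import Mathlib

/-- The elliptic curve `14A4 : Y² - XY + Y = X³` over `ℚ` (the Deuring curve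
`D(-1,1)`). -/
def W14A4 : WeierstrassCurve.Affine ℚ := ⟨-1, 0, 1, 0, 0⟩

/-- The `x`-coordinate of a nonsingular affine point (junk value `0` at infinity). -/
noncomputable def ptx {F : Type*} [Field F] {W : WeierstrassCurve.Affine F} : W.Point → F
  | .zero => 0
  | .some x _ _ => x

/-- The `y`-coordinate of a nonsingular affine point (junk value `0` at infinity). -/
noncomputable def pty {F : Type*} [Field F] {W : WeierstrassCurve.Affine F} : W.Point → F
  | .zero => 0
  | .some _ y _ => y

open WeierstrassCurve.Affine in
lemma some_eq_aux {F : Type*} [Field F] {W : WeierstrassCurve.Affine F} {x₁ y₁ x₂ y₂ : F}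
    (h₁ : W.Nonsingular x₁ y₁) (h₂ : W.Nonsingular x₂ y₂) (hx : x₁ = x₂) (hy : y₁ = y₂) :
    Point.some _ _ h₁ = Point.some _ _ h₂ := by subst hx hy; rfl

/-- On the curve `14A4 : Y² - XY + Y = X³` with `P = (0,0)`, `Q = (-1,-1)` and
`p = -(P + Q) = (1,1)`: (a) the chord through `p` and `2p` is parallel to the
tangent line at `4p`, and (b) the chord through `3p` and `4p` is parallel to the
tangent line at `2p`.  Chord slopes are `(y(v) - y(u))/(x(v) - x(u))` and the
tangent slope of the plane curve `Y² - XY + Y = X³` at `(x₀, y₀)` is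
`(3x₀² + y₀)/(2y₀ - x₀ + 1)`; all four lines are non-vertical. -/
theorem parallel_lines_14A4 (hP : W14A4.Nonsingular 0 0)
    (hQ : W14A4.Nonsingular (-1) (-1)) (hp : W14A4.Nonsingular 1 1) :
    letI P : W14A4.Point := WeierstrassCurve.Affine.Point.some _ _ hP
    letI Q : W14A4.Point := WeierstrassCurve.Affine.Point.some _ _ hQ
    letI p : W14A4.Point := WeierstrassCurve.Affine.Point.some _ _ hp
    p = -(P + Q) ∧
    -- (a): the chord through `p`, `2p` and the tangent at `4p` are non-vertical
    -- and parallel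
    (ptx ((2 : ℤ) • p) ≠ ptx p ∧
      2 * pty ((4 : ℤ) • p) - ptx ((4 : ℤ) • p) + 1 ≠ 0 ∧
      (pty ((2 : ℤ) • p) - pty p) / (ptx ((2 : ℤ) • p) - ptx p) =
        (3 * ptx ((4 : ℤ) • p) ^ 2 + pty ((4 : ℤ) • p)) /
          (2 * pty ((4 : ℤ) • p) - ptx ((4 : ℤ) • p) + 1)) ∧
    -- (b): the chord through `3p`, `4p` and the tangent at `2p` are non-vertical
    -- and parallel
    (ptx ((4 : ℤ) • p) ≠ ptx ((3 : ℤ) • p) ∧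
      2 * pty ((2 : ℤ) • p) - ptx ((2 : ℤ) • p) + 1 ≠ 0 ∧
      (pty ((4 : ℤ) • p) - pty ((3 : ℤ) • p)) / (ptx ((4 : ℤ) • p) - ptx ((3 : ℤ) • p)) =
        (3 * ptx ((2 : ℤ) • p) ^ 2 + pty ((2 : ℤ) • p)) /
          (2 * pty ((2 : ℤ) • p) - ptx ((2 : ℤ) • p) + 1)) := by
  open WeierstrassCurve.Affine in
  set p : W14A4.Point := WeierstrassCurve.Affine.Point.some _ _ hp with hpdef
  have h4 : W14A4.Nonsingular 0 (-1) := by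
    have := (W14A4.nonsingular_neg 0 0).mpr hP
    rwa [show W14A4.negY 0 0 = -1 by norm_num [W14A4, negY]] at this
  have hPQ : W14A4.Nonsingular 1 (-1) := by
    have := (W14A4.nonsingular_neg 1 1).mpr hp
    rwa [show W14A4.negY 1 1 = -1 by norm_num [W14A4, negY]] at this
  -- p + p = P
  have hy1 : (1 : ℚ) ≠ W14A4.negY 1 1 := by norm_num [W14A4, negY]
  have e2 : p + p = Point.some _ _ hP := by
    rw [Point.add_of_Y_ne hy1]
    apply some_eq_aux <;>
      simp [W14A4, addX, addY, negAddY, negY, slope_of_Y_ne rfl hy1] <;> norm_num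
  -- P + p = Q
  have hx01 : (0 : ℚ) ≠ 1 := by norm_num
  have e3 : Point.some _ _ hP + p = Point.some _ _ hQ := by
    rw [Point.add_of_X_ne hx01]
    apply some_eq_aux <;>
      simp [W14A4, addX, addY, negAddY, negY, slope_of_X_ne hx01] <;> norm_num
  -- P + P = (0, -1)
  have hy0 : (0 : ℚ) ≠ W14A4.negY 0 0 := by norm_num [W14A4, negY]
  have e4 : Point.some _ _ hP + Point.some _ _ hP = Point.some _ _ h4 := by
    rw [Point.add_of_Y_ne hy0]
    apply some_eq_aux <;>
      simp [W14A4, addX, addY, negAddY, negY, slope_of_Y_ne rfl hy0] <;> norm_num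
  -- P + Q = (1, -1)
  have hx0m1 : (0 : ℚ) ≠ -1 := by norm_num
  have ePQ : Point.some _ _ hP + Point.some _ _ hQ = Point.some _ _ hPQ := by
    rw [Point.add_of_X_ne hx0m1]
    apply some_eq_aux <;>
      simp [W14A4, addX, addY, negAddY, negY, slope_of_X_ne hx0m1] <;> norm_num
  have s2 : (2 : ℤ) • p = Point.some _ _ hP := by rw [two_zsmul]; exact e2
  have s3 : (3 : ℤ) • p = Point.some _ _ hQ := by
    rw [show (3 : ℤ) = 2 + 1 by norm_num, add_zsmul, one_zsmul, s2]; exact e3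
  have s4 : (4 : ℤ) • p = Point.some _ _ h4 := by
    rw [show (4 : ℤ) = 2 + 2 by norm_num, add_zsmul, s2]; exact e4
  refine ⟨?_, ?_, ?_⟩
  · show p = -(Point.some _ _ hP + Point.some _ _ hQ)
    rw [ePQ, Point.neg_some]
    apply some_eq_aux
    · rfl
    · norm_num [W14A4, negY]
  · rw [s2, s4]
    refine ⟨by norm_num [ptx, pty], by norm_num [ptx, pty], by norm_num [ptx, pty]⟩
  · rw [s2, s3, s4]
    refine ⟨by norm_num [ptx, pty], by norm_num [ptx, pty], by norm_num [ptx, pty]⟩
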